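/- Let A → B be a local homomorphism of seminormed commutative local rings with maximal ideals m_A, m_B, and equip the residue fields k_A = A/m_A and k_B = B/m_B with the quotient seminorms. If every element of m_B has seminorm 0 in B, then the natural surjection Ω_{B/A} → Ω_{k_B/k_A} is an isometry for the Kähler seminorms on both sides. -/

import Mathlib

open scoped NNReal TensorProduct

/-- A (nonarchimedean) seminorm on an additive group. -/
def IsGroupSeminorm {M : Type*} [AddCommGroup M] (f : M → ℝ≥0) : Prop :=
  f 0 = 0 ∧ ∀ x y : M, f (x - y) ≤ max (f x) (f y)

/-- A seminorm on a commutative ring. -/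
def IsRingSeminorm {A : Type*} [CommRing A] (f : A → ℝ≥0) : Prop :=
  IsGroupSeminorm f ∧ f 1 = 1 ∧ ∀ x y : A, f (x * y) ≤ f x * f y

/-- The Kähler seminorm on `Ω[B⁄A]` induced by a seminorm `vB` on `B`. -/
noncomputable def kahlerSeminorm (A B : Type*) [CommRing A] [CommRing B] [Algebra A B]
    (vB : B → ℝ≥0) (x : Ω[B⁄A]) : ℝ≥0 :=
  sInf { r | ∃ (n : ℕ) (c b : Fin n → B),
    x = ∑ i, c i • KaehlerDifferential.D A B (b i) ∧
    r = Finset.univ.sup fun i => vB (c i) * vB (b i) }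

/-- The quotient seminorm induced by a (surjective) map `f : M → N` from a seminorm on `M`. -/
noncomputable def quotientSeminorm {M N : Type*} (f : M → N) (v : M → ℝ≥0) (y : N) : ℝ≥0 :=
  sInf { r | ∃ x : M, f x = y ∧ r = v x }


section
variable {A B : Type*} [CommRing A] [CommRing B] [Algebra A B]

lemma exists_kahler_rep (x : Ω[B⁄A]) :
    ∃ (n : ℕ) (c b : Fin n → B), x = ∑ i, c i • KaehlerDifferential.D A B (b i) := by
  classical
  have hx : x ∈ Submodule.span B (Set.range (KaehlerDifferential.D A B)) := by
    rw [KaehlerDifferential.span_range_derivation]; trivial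
  rw [Finsupp.mem_span_range_iff_exists_finsupp] at hx
  obtain ⟨f, hf⟩ := hx
  let e := f.support.equivFin
  refine ⟨f.support.card, fun i => f ((e.symm i : B)), fun i => (e.symm i : B), ?_⟩
  rw [← hf, Finsupp.sum,
    ← Finset.sum_coe_sort f.support (fun b => f b • KaehlerDifferential.D A B b),
    ← Equiv.sum_comp e.symm
      (fun s : f.support => f (s : B) • KaehlerDifferential.D A B (s : B))]

/-- Elements of `Ω[B⁄A]` admitting a representation all of whose terms have value zero. -/
def zeroRepSubmodule (vB : B → ℝ≥0) (hsub : ∀ x y : B, vB (x * y) ≤ vB x * vB y) :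
    Submodule B (Ω[B⁄A]) where
  carrier := {x | ∃ (n : ℕ) (c b : Fin n → B),
      x = ∑ i, c i • KaehlerDifferential.D A B (b i) ∧ ∀ i, vB (c i) * vB (b i) = 0}
  zero_mem' := ⟨0, fun i => i.elim0, fun i => i.elim0, by simp, fun i => i.elim0⟩
  add_mem' := by
    rintro x y ⟨n, c, b, hx, h0⟩ ⟨m, c', b', hy, h0'⟩
    refine ⟨n + m, Fin.append c c', Fin.append b b', ?_, ?_⟩
    · rw [Fin.sum_univ_add]
      simp only [Fin.append_left, Fin.append_right]
      rw [hx, hy]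
    · intro i
      refine Fin.addCases (fun j => ?_) (fun j => ?_) i
      · simp only [Fin.append_left]; exact h0 j
      · simp only [Fin.append_right]; exact h0' j
  smul_mem' := by
    rintro r x ⟨n, c, b, hx, h0⟩
    refine ⟨n, fun i => r * c i, b, ?_, ?_⟩
    · rw [hx, Finset.smul_sum]
      exact Finset.sum_congr rfl fun i _ => smul_smul r (c i) _
    · intro i
      have h1 : vB (r * c i) * vB (b i) ≤ vB r * vB (c i) * vB (b i) :=
        mul_le_mul_left (hsub r (c i)) _
      rw [mul_assoc, h0 i, mul_zero] at h1
      exact le_antisymm h1 (zero_le)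

lemma ker_phi_le {K L : Type*} [Field K] [Field L] [Algebra K L]
    (πA : A →+* K) (πB : B →+* L)
    (hπAsurj : Function.Surjective πA)
    (hπBsurj : Function.Surjective πB)
    (hcompat : ∀ a : A, algebraMap K L (πA a) = πB (algebraMap A B a))
    (Φ : Ω[B⁄A] →+ Ω[L⁄K])
    (hΦ : ∀ c b : B,
      Φ (c • KaehlerDifferential.D A B b) = πB c • KaehlerDifferential.D K L (πB b))
    (x : Ω[B⁄A]) (hx : Φ x = 0) :
    x ∈ (RingHom.ker πB) • (⊤ : Submodule B (Ω[B⁄A])) ⊔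
      Submodule.span B (KaehlerDifferential.D A B '' (RingHom.ker πB)) := by
  classical
  set N : Submodule B (Ω[B⁄A]) := (RingHom.ker πB) • (⊤ : Submodule B (Ω[B⁄A])) ⊔
      Submodule.span B (KaehlerDifferential.D A B '' (RingHom.ker πB)) with hN
  have hDcongr : ∀ b b' : B, πB b = πB b' →
      N.mkQ (KaehlerDifferential.D A B b) = N.mkQ (KaehlerDifferential.D A B b') := by
    intro b b' h
    refine (Submodule.Quotient.eq N).mpr ?_
    rw [← map_sub]
    refine Submodule.mem_sup_right (Submodule.subset_span ⟨b - b', ?_, rfl⟩)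
    rw [SetLike.mem_coe, RingHom.mem_ker, map_sub, h, sub_self]
  letI sL : SMul L (Ω[B⁄A] ⧸ N) := ⟨fun l q => Function.surjInv hπBsurj l • q⟩
  have hsmul : ∀ (c : B) (q : Ω[B⁄A] ⧸ N), πB c • q = c • q := by
    intro c q
    obtain ⟨ω, rfl⟩ := N.mkQ_surjective q
    show Function.surjInv hπBsurj (πB c) • N.mkQ ω = c • N.mkQ ω
    rw [← map_smul, ← map_smul]
    refine (Submodule.Quotient.eq N).mpr ?_
    rw [← sub_smul]
    refine Submodule.mem_sup_left (Submodule.smul_mem_smul ?_ trivial)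
    rw [RingHom.mem_ker, map_sub, Function.surjInv_eq hπBsurj, sub_self]
  letI modL : Module L (Ω[B⁄A] ⧸ N) := Function.Surjective.moduleLeft πB hπBsurj hsmul
  letI modK : Module K (Ω[B⁄A] ⧸ N) := Module.compHom _ (algebraMap K L)
  letI : IsScalarTower K L (Ω[B⁄A] ⧸ N) := ⟨fun k l q => by
    show (k • l) • q = algebraMap K L k • (l • q)
    rw [Algebra.smul_def, mul_smul]⟩
  have hs : ∀ l : L, πB (Function.surjInv hπBsurj l) = l := Function.surjInv_eq hπBsurj
  set dfun : L → (Ω[B⁄A] ⧸ N) :=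
    fun l => N.mkQ (KaehlerDifferential.D A B (Function.surjInv hπBsurj l)) with hdf
  have hdfun : ∀ b : B, dfun (πB b) = N.mkQ (KaehlerDifferential.D A B b) :=
    fun b => hDcongr _ _ (hs _)
  let Dbar : Derivation K L (Ω[B⁄A] ⧸ N) :=
    { toFun := dfun
      map_add' := by
        intro l1 l2
        obtain ⟨b1, rfl⟩ := hπBsurj l1
        obtain ⟨b2, rfl⟩ := hπBsurj l2
        rw [← map_add πB, hdfun, hdfun, hdfun, map_add, map_add]
      map_smul' := by
        intro k l
        obtain ⟨a, rfl⟩ := hπAsurj k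
        obtain ⟨b, rfl⟩ := hπBsurj l
        show dfun (πA a • πB b) = πA a • dfun (πB b)
        have h1 : πA a • πB b = πB (algebraMap A B a * b) := by
          rw [Algebra.smul_def, hcompat, ← map_mul]
        rw [h1, hdfun, Derivation.leibniz, Derivation.map_algebraMap, smul_zero, add_zero,
          map_smul]
        calc (algebraMap A B a) • N.mkQ (KaehlerDifferential.D A B b)
            = πB (algebraMap A B a) • N.mkQ (KaehlerDifferential.D A B b) := (hsmul _ _).symm
          _ = algebraMap K L (πA a) • N.mkQ (KaehlerDifferential.D A B b) := by rw [hcompat]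
          _ = πA a • dfun (πB b) := by rw [hdfun]; rfl
      map_one_eq_zero' := by
        show dfun 1 = 0
        rw [← map_one πB, hdfun, Derivation.map_one_eq_zero, map_zero]
      leibniz' := by
        intro l1 l2
        obtain ⟨b1, rfl⟩ := hπBsurj l1
        obtain ⟨b2, rfl⟩ := hπBsurj l2
        show dfun (πB b1 * πB b2) = πB b1 • dfun (πB b2) + πB b2 • dfun (πB b1)
        rw [← map_mul, hdfun, hdfun, hdfun, hsmul, hsmul, Derivation.leibniz, map_add,
          map_smul, map_smul] }
  have key : ∀ y : Ω[B⁄A], Dbar.liftKaehlerDifferential (Φ y) = N.mkQ y := by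
    intro y
    obtain ⟨n, c, b, rfl⟩ := exists_kahler_rep y
    rw [map_sum Φ, map_sum, map_sum]
    refine Finset.sum_congr rfl fun i _ => ?_
    rw [hΦ, map_smul, Derivation.liftKaehlerDifferential_comp_D]
    show πB (c i) • dfun (πB (b i)) = N.mkQ (c i • KaehlerDifferential.D A B (b i))
    rw [hdfun, hsmul, map_smul]
  have h0 := key x
  rw [hx, map_zero] at h0
  exact (Submodule.Quotient.mk_eq_zero N).mp h0.symm
end

/-- Let `A → B` be a local non-expansive homomorphism of seminormed local rings, and let
`K = A/m_A`, `L = B/m_B` be the residue fields (presented by surjections `πA`, `πB` with kernels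
the maximal ideals), equipped with the quotient seminorms. If every element of `m_B` has
seminorm `0`, then the natural map `Ω_{B/A} → Ω_{L/K}` (characterized by
`c • d b ↦ πB c • d (πB b)`) is an isometry for the Kähler seminorms. -/
theorem kahlerSeminorm_isometry_to_residue_fields
    {A B K L : Type*} [CommRing A] [CommRing B] [IsLocalRing A] [IsLocalRing B]
    [Algebra A B] [Field K] [Field L] [Algebra K L]
    (vA : A → ℝ≥0) (vB : B → ℝ≥0)
    (hA : IsRingSeminorm vA) (hB : IsRingSeminorm vB)
    (hnonexp : ∀ a : A, vB (algebraMap A B a) ≤ vA a)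
    (hlocal : ∀ a ∈ IsLocalRing.maximalIdeal A, algebraMap A B a ∈ IsLocalRing.maximalIdeal B)
    (πA : A →+* K) (πB : B →+* L)
    (hπAsurj : Function.Surjective πA) (hπAker : RingHom.ker πA = IsLocalRing.maximalIdeal A)
    (hπBsurj : Function.Surjective πB) (hπBker : RingHom.ker πB = IsLocalRing.maximalIdeal B)
    (hcompat : ∀ a : A, algebraMap K L (πA a) = πB (algebraMap A B a))
    (hmB : ∀ b ∈ IsLocalRing.maximalIdeal B, vB b = 0)
    (Φ : Ω[B⁄A] →+ Ω[L⁄K])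
    (hΦ : ∀ c b : B,
      Φ (c • KaehlerDifferential.D A B b) = πB c • KaehlerDifferential.D K L (πB b)) :
    ∀ x : Ω[B⁄A],
      kahlerSeminorm K L (quotientSeminorm πB vB) (Φ x) = kahlerSeminorm A B vB x := by
  classical
  intro x
  have hker : ∀ b : B, b ∈ RingHom.ker πB → vB b = 0 := fun b hb => hmB b (hπBker ▸ hb)
  unfold kahlerSeminorm
  set vL : L → ℝ≥0 := quotientSeminorm πB vB with hvL
  have hvL_le : ∀ b : B, vL (πB b) ≤ vB b := fun b =>
    csInf_le (OrderBot.bddBelow _) ⟨b, rfl, rfl⟩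
  apply le_antisymm
  · -- ‖Φ x‖ ≤ ‖x‖
    obtain ⟨n₀, c₀, b₀, hx₀⟩ := exists_kahler_rep x
    refine le_csInf ⟨_, ⟨n₀, c₀, b₀, hx₀, rfl⟩⟩ ?_
    rintro r ⟨n, c, b, hrep, rfl⟩
    refine csInf_le_of_le (OrderBot.bddBelow _)
      ⟨n, fun i => πB (c i), fun i => πB (b i), ?_, rfl⟩ ?_
    · rw [hrep, map_sum]
      exact Finset.sum_congr rfl fun i _ => hΦ _ _
    · exact Finset.sup_mono_fun fun i _ => mul_le_mul' (hvL_le _) (hvL_le _)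
  · -- ‖x‖ ≤ ‖Φ x‖
    obtain ⟨m₀, γ₀, β₀, hΦx₀⟩ := exists_kahler_rep (Φ x)
    refine le_csInf ⟨_, ⟨m₀, γ₀, β₀, hΦx₀, rfl⟩⟩ ?_
    rintro r ⟨n, γ, β, hrep, rfl⟩
    refine le_of_forall_pos_le_add fun ε hε => ?_
    set C : ℝ≥0 := (Finset.univ.sup fun i => vL (γ i) + vL (β i)) + 1 with hC
    have hC1 : (1 : ℝ≥0) ≤ C := le_add_self
    have hC0 : C ≠ 0 := (lt_of_lt_of_le one_pos hC1).ne'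
    set δ : ℝ≥0 := min 1 (ε / C) with hδ
    have hδpos : 0 < δ := lt_min one_pos (by
      rw [pos_iff_ne_zero]
      exact div_ne_zero hε.ne' hC0)
    have hlift : ∀ l : L, ∃ bb : B, πB bb = l ∧ vB bb < vL l + δ := by
      intro l
      obtain ⟨b0, hb0⟩ := hπBsurj l
      have hne : {r : ℝ≥0 | ∃ x : B, πB x = l ∧ r = vB x}.Nonempty := ⟨vB b0, b0, hb0, rfl⟩
      have hlt : sInf {r : ℝ≥0 | ∃ x : B, πB x = l ∧ r = vB x} < vL l + δ :=
        lt_of_le_of_lt (le_of_eq rfl) (lt_add_of_pos_right _ hδpos)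
      obtain ⟨r', ⟨bb, hbb, rfl⟩, hr'⟩ := exists_lt_of_csInf_lt hne hlt
      exact ⟨bb, hbb, hr'⟩
    choose cc hcc1 hcc2 using fun i => hlift (γ i)
    choose bb hbb1 hbb2 using fun i => hlift (β i)
    have hΦy : Φ (∑ i, cc i • KaehlerDifferential.D A B (bb i)) = Φ x := by
      rw [map_sum, hrep]
      exact Finset.sum_congr rfl fun i _ => by rw [hΦ, hcc1, hbb1]
    have hz : Φ (x - ∑ i, cc i • KaehlerDifferential.D A B (bb i)) = 0 := by
      rw [map_sub, hΦy, sub_self]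
    have hzN := ker_phi_le πA πB hπAsurj hπBsurj hcompat Φ hΦ _ hz
    have hzP : (x - ∑ i, cc i • KaehlerDifferential.D A B (bb i)) ∈
        zeroRepSubmodule vB hB.2.2 := by
      refine (?_ : _ ≤ zeroRepSubmodule vB hB.2.2) hzN
      refine sup_le ?_ ?_
      · refine Submodule.smul_le.mpr ?_
        intro m hm ω _
        obtain ⟨n', c', b', hrep'⟩ := exists_kahler_rep ω
        refine ⟨n', fun i => m * c' i, b', ?_, ?_⟩
        · rw [hrep', Finset.smul_sum]
          exact Finset.sum_congr rfl fun i _ => smul_smul m (c' i) _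
        · intro i
          have h1 : vB (m * c' i) * vB (b' i) ≤ vB m * vB (c' i) * vB (b' i) :=
            mul_le_mul_left (hB.2.2 m (c' i)) _
          rw [hker m hm, zero_mul, zero_mul] at h1
          exact le_antisymm h1 (zero_le)
      · rw [Submodule.span_le]
        rintro _ ⟨m, hm, rfl⟩
        refine ⟨1, fun _ => 1, fun _ => m, by simp, fun i => ?_⟩
        rw [hker m hm, mul_zero]
    obtain ⟨n', c', b', hrep', hzero'⟩ := hzP
    refine csInf_le_of_le (OrderBot.bddBelow _)
      ⟨n + n', Fin.append cc c', Fin.append bb b', ?_, rfl⟩ ?_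
    · rw [Fin.sum_univ_add]
      simp only [Fin.append_left, Fin.append_right]
      rw [← hrep']
      abel
    · refine Finset.sup_le fun i _ => ?_
      refine Fin.addCases (fun j => ?_) (fun j => ?_) i
      · simp only [Fin.append_left]
        calc vB (cc j) * vB (bb j) ≤ (vL (γ j) + δ) * (vL (β j) + δ) :=
              mul_le_mul' (hcc2 j).le (hbb2 j).le
          _ = vL (γ j) * vL (β j) + δ * (vL (γ j) + vL (β j) + δ) := by ring
          _ ≤ (Finset.univ.sup fun i => vL (γ i) * vL (β i)) + ε := by
              refine add_le_add (Finset.le_sup (f := fun i => vL (γ i) * vL (β i)) (Finset.mem_univ j)) ?_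
              calc δ * (vL (γ j) + vL (β j) + δ)
                  ≤ (ε / C) * ((Finset.univ.sup fun i => vL (γ i) + vL (β i)) + 1) := by
                    refine mul_le_mul' (min_le_right _ _) ?_
                    exact add_le_add (Finset.le_sup (f := fun i => vL (γ i) + vL (β i)) (Finset.mem_univ j)) (min_le_left _ _)
                _ = (ε / C) * C := by rw [hC]
                _ = ε := div_mul_cancel₀ ε hC0
      · simp only [Fin.append_right]
        rw [hzero' j]
        exact zero_le
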